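/- arXiv:math/0512201 — 2 statements merged into one kernel-verified Lean document; each statement's English description precedes it below -/
import Mathlib

section
/- Let n ≥ 2 be an integer and let (ξ_i)_{i≥1} be i.i.d. random variables with the Binomial(n, 1/n) distribution. Set S_0 = 1 and S_t = 1 + Σ_{i=1}^{t}(ξ_i − 1), fix an integer H with 2 ≤ H ≤ n, and let γ = min{t ≥ 1 : S_t ≥ H or S_t = 0}. Then E[S_γ² | S_γ ≥ H] ≤ H² + 3H. -/
open MeasureTheory ProbabilityTheory
open scoped ENNReal

/-- The Binomial(n,p) distribution, as a measure on `ℕ`. -/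
noncomputable def binomialMeasure (n : ℕ) (p : ℝ) : Measure ℕ :=
  Measure.sum fun k : ℕ =>
    (ENNReal.ofReal ((n.choose k : ℝ) * p ^ k * (1 - p) ^ (n - k))) • Measure.dirac k

namespace NPaux

noncomputable def W (n k : ℕ) : ℝ := (n.choose k : ℝ) * (1/(n:ℝ)) ^ k * (1 - 1/(n:ℝ)) ^ (n - k)

lemma one_sub_nonneg {n : ℕ} (hn : 2 ≤ n) : (0:ℝ) ≤ 1 - 1/(n:ℝ) := by
  have h1 : (1:ℝ) ≤ (n:ℝ) := by exact_mod_cast Nat.one_le_of_lt hn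
  have : 1/(n:ℝ) ≤ 1 := by
    rw [div_le_one (by linarith)]; linarith
  linarith

lemma W_nonneg {n : ℕ} (hn : 2 ≤ n) (k : ℕ) : 0 ≤ W n k := by
  have h0 : (0:ℝ) ≤ 1/(n:ℝ) := by positivity
  exact mul_nonneg (mul_nonneg (by positivity) (pow_nonneg h0 _))
    (pow_nonneg (one_sub_nonneg hn) _)

lemma W_succ_le {n k : ℕ} (hn : 2 ≤ n) (hk : 2 ≤ k) : 3 * W n (k+1) ≤ W n k := by
  rcases le_or_gt n k with h | h
  · have : n.choose (k+1) = 0 := Nat.choose_eq_zero_of_lt (by omega)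
    simp only [W, this, Nat.cast_zero, zero_mul, mul_zero]
    exact W_nonneg hn k
  · -- k < n, so n ≥ 3
    have hn3 : 3 ≤ n := by omega
    have hnR : (3:ℝ) ≤ (n:ℝ) := by exact_mod_cast hn3
    have hnpos : (0:ℝ) < (n:ℝ) := by linarith
    have hp : (0:ℝ) < 1/(n:ℝ) := by positivity
    have hq : (0:ℝ) < 1 - 1/(n:ℝ) := by
      rw [sub_pos, div_lt_one hnpos]; linarith
    -- choose identity
    have hchoose : (n.choose (k+1) : ℝ) * (k+1) = (n.choose k : ℝ) * ((n:ℝ) - k) := by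
      have := Nat.choose_succ_right_eq n k
      have hcast : ((n.choose (k+1) * (k+1) : ℕ) : ℝ) = ((n.choose k * (n - k) : ℕ) : ℝ) := by
        exact_mod_cast congrArg (Nat.cast : ℕ → ℝ) this
      push_cast [Nat.cast_sub h.le] at hcast
      linarith
    have hsub : n - k = (n - (k+1)) + 1 := by omega
    have hWk : W n k = (n.choose k : ℝ) * (1/(n:ℝ))^k * ((1 - 1/(n:ℝ))^(n-(k+1)) * (1 - 1/(n:ℝ))) := by
      rw [W, hsub, pow_succ]
    have hWk1 : W n (k+1) = (n.choose (k+1) : ℝ) * ((1/(n:ℝ))^k * (1/(n:ℝ))) * (1 - 1/(n:ℝ))^(n-(k+1)) := by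
      rw [W, pow_succ]
    rw [hWk, hWk1]
    have hpk : (0:ℝ) ≤ (1/(n:ℝ))^k := le_of_lt (pow_pos hp k)
    have hqk : (0:ℝ) ≤ (1 - 1/(n:ℝ))^(n-(k+1)) := le_of_lt (pow_pos hq _)
    -- suffices : 3 * choose(n,k+1) * p ≤ choose(n,k) * (1-p)
    have hc0 : (0:ℝ) < (n.choose k : ℝ) := by exact_mod_cast Nat.choose_pos h.le
    have key : 3 * ((n.choose (k+1) : ℝ) * (1/(n:ℝ))) ≤ (n.choose k : ℝ) * (1 - 1/(n:ℝ)) := by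
      have hkR : (2:ℝ) ≤ (k:ℝ) := by exact_mod_cast hk
      have hkn : (k:ℝ) < (n:ℝ) := by exact_mod_cast h
      have h1 : 3 * ((n.choose (k+1) : ℝ) * (1/(n:ℝ))) = (3*(n.choose (k+1):ℝ))/(n:ℝ) := by ring
      have h2 : (n.choose k : ℝ) * (1 - 1/(n:ℝ)) = ((n.choose k:ℝ)*((n:ℝ)-1))/(n:ℝ) := by
        field_simp
      rw [h1, h2, div_le_div_iff_of_pos_right hnpos]
      have hkpos : (0:ℝ) < (k:ℝ) + 1 := by positivity
      apply le_of_mul_le_mul_right _ hkpos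
      have h3 : 3*((n:ℝ)-(k:ℝ)) ≤ ((n:ℝ)-1)*((k:ℝ)+1) := by nlinarith
      calc 3*(n.choose (k+1):ℝ) * ((k:ℝ)+1) = 3 * ((n.choose (k+1):ℝ) * ((k:ℝ)+1)) := by ring
        _ = 3 * ((n.choose k:ℝ) * ((n:ℝ)-(k:ℝ))) := by rw [hchoose]
        _ = (n.choose k:ℝ) * (3*((n:ℝ)-(k:ℝ))) := by ring
        _ ≤ (n.choose k:ℝ) * (((n:ℝ)-1)*((k:ℝ)+1)) := by
            exact mul_le_mul_of_nonneg_left h3 hc0.le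
        _ = (n.choose k:ℝ)*((n:ℝ)-1) * ((k:ℝ)+1) := by ring
    calc 3 * ((n.choose (k+1) : ℝ) * ((1/(n:ℝ))^k * (1/(n:ℝ))) * (1 - 1/(n:ℝ))^(n-(k+1)))
        = (3 * ((n.choose (k+1):ℝ) * (1/(n:ℝ)))) * ((1/(n:ℝ))^k * (1 - 1/(n:ℝ))^(n-(k+1))) := by ring
      _ ≤ ((n.choose k : ℝ) * (1 - 1/(n:ℝ))) * ((1/(n:ℝ))^k * (1 - 1/(n:ℝ))^(n-(k+1))) := by
          apply mul_le_mul_of_nonneg_right key (mul_nonneg hpk hqk)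
      _ = (n.choose k : ℝ) * (1/(n:ℝ))^k * ((1 - 1/(n:ℝ))^(n-(k+1)) * (1 - 1/(n:ℝ))) := by ring

end NPaux

namespace NPaux

lemma W_add_le {n m : ℕ} (hn : 2 ≤ n) (hm : 2 ≤ m) (j : ℕ) :
    W n (m + j) ≤ W n m * (1/3)^j := by
  induction j with
  | zero => simp
  | succ j ih =>
    have h1 : 3 * W n (m + j + 1) ≤ W n (m + j) := W_succ_le hn (by omega)
    have : W n (m + (j+1)) ≤ W n (m + j) / 3 := by
      rw [show m + (j+1) = m + j + 1 by omega]
      linarith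
    calc W n (m + (j+1)) ≤ W n (m + j) / 3 := this
      _ ≤ (W n m * (1/3)^j) / 3 := by linarith
      _ = W n m * (1/3)^(j+1) := by rw [pow_succ]; ring

lemma binom_lintegral (n : ℕ) (f : ℕ → ℝ≥0∞) :
    ∫⁻ k, f k ∂(binomialMeasure n (1/(n:ℝ))) = ∑' k, ENNReal.ofReal (W n k) * f k := by
  rw [binomialMeasure, lintegral_sum_measure]
  congr 1
  ext k
  rw [lintegral_smul_measure, lintegral_dirac]
  rfl

lemma binom_measure (n : ℕ) (C : Set ℕ) :
    binomialMeasure n (1/(n:ℝ)) C = ∑' k, ENNReal.ofReal (W n k) * C.indicator 1 k := by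
  rw [binomialMeasure, Measure.sum_apply _ (MeasurableSet.of_discrete)]
  congr 1
  ext k
  rw [Measure.smul_apply, Measure.dirac_apply]
  simp [Set.indicator, W, one_div, ENNReal.smul_def]

end NPaux

namespace NPaux

lemma le_pow32 : ∀ j : ℕ, (j:ℝ) ≤ (3/2)^j := by
  intro j
  induction j with
  | zero => norm_num
  | succ j ih =>
    rcases Nat.lt_or_ge j 2 with h | h
    · interval_cases j <;> norm_num
    · have hj2 : (2:ℝ) ≤ (j:ℝ) := by exact_mod_cast h
      have h1 : ((j:ℝ)+1) ≤ 3/2*(j:ℝ) := by linarith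
      have h2 : (3/2:ℝ)*(j:ℝ) ≤ 3/2*(3/2)^j := by
        apply mul_le_mul_of_nonneg_left ih (by norm_num)
      push_cast
      calc (j:ℝ)+1 ≤ 3/2*(j:ℝ) := h1
        _ ≤ 3/2*(3/2)^j := h2
        _ = (3/2)^(j+1) := by rw [pow_succ]; ring

lemma series_bound {H : ℕ} (hH : 2 ≤ H) :
    ∑' j : ℕ, ENNReal.ofReal ((1/3:ℝ)^j * (2*H*j + (j:ℝ)^2)) ≤ ENNReal.ofReal (3*H) := by
  set f : ℕ → ℝ := fun j => (1/3:ℝ)^j * (2*H*j + (j:ℝ)^2) with hf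
  have hfnn : ∀ j, 0 ≤ f j := fun j => by positivity
  set g : ℕ → ℝ := fun j => 2*(H:ℝ)*((j:ℝ)*(1/3)^j) + (j:ℝ)*(1/2)^j with hg
  have hfg : ∀ j, f j ≤ g j := by
    intro j
    have h3 : (j:ℝ)*(1/3)^j ≤ (1/2)^j := by
      calc (j:ℝ)*(1/3)^j ≤ (3/2)^j*(1/3)^j :=
            mul_le_mul_of_nonneg_right (le_pow32 j) (by positivity)
        _ = (1/2)^j := by rw [← mul_pow]; norm_num
    have h2 : (j:ℝ)^2*(1/3)^j ≤ (j:ℝ)*(1/2)^j := by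
      calc (j:ℝ)^2*(1/3)^j = (j:ℝ)*((j:ℝ)*(1/3)^j) := by ring
        _ ≤ (j:ℝ)*(1/2)^j := mul_le_mul_of_nonneg_left h3 (Nat.cast_nonneg j)
    have : f j = 2*(H:ℝ)*((j:ℝ)*(1/3)^j) + (j:ℝ)^2*(1/3)^j := by rw [hf]; ring
    rw [this, hg]
    linarith
  have hs1 : Summable (fun j : ℕ => (j:ℝ)*(1/3)^j) := by
    have := summable_pow_mul_geometric_of_norm_lt_one (R := ℝ) 1 (r := 1/3) (by norm_num)
    simpa using this
  have hs2 : Summable (fun j : ℕ => (j:ℝ)*(1/2)^j) := by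
    have := summable_pow_mul_geometric_of_norm_lt_one (R := ℝ) 1 (r := 1/2) (by norm_num)
    simpa using this
  have hgsum : Summable g := ((hs1.mul_left _).add hs2)
  have hfsum : Summable f := Summable.of_nonneg_of_le hfnn hfg hgsum
  have ht1 : ∑' j : ℕ, (j:ℝ)*(1/3)^j = 3/4 := by
    rw [tsum_coe_mul_geometric_of_norm_lt_one (by norm_num : ‖(1/3:ℝ)‖ < 1)]
    norm_num
  have ht2 : ∑' j : ℕ, (j:ℝ)*(1/2)^j = 2 := by
    rw [tsum_coe_mul_geometric_of_norm_lt_one (by norm_num : ‖(1/2:ℝ)‖ < 1)]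
    norm_num
  have htg : ∑' j, g j = 2*(H:ℝ)*(3/4) + 2 := by
    rw [hg, Summable.tsum_add (hs1.mul_left _) hs2, tsum_mul_left, ht1, ht2]
  have hHR : (2:ℝ) ≤ (H:ℝ) := by exact_mod_cast hH
  have : ∑' j, f j ≤ 3*(H:ℝ) := by
    calc ∑' j, f j ≤ ∑' j, g j := Summable.tsum_le_tsum hfg hfsum hgsum
      _ = 2*(H:ℝ)*(3/4) + 2 := htg
      _ ≤ 3*(H:ℝ) := by linarith
  calc ∑' j : ℕ, ENNReal.ofReal (f j) = ENNReal.ofReal (∑' j, f j) :=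
        (ENNReal.ofReal_tsum_of_nonneg hfnn hfsum).symm
    _ ≤ ENNReal.ofReal (3*H) := ENNReal.ofReal_le_ofReal this

end NPaux

namespace NPaux

lemma binom_tail {n H m : ℕ} (hn : 2 ≤ n) (hH : 2 ≤ H) (hm2 : 2 ≤ m) (hmH : m ≤ H) :
    ∫⁻ k, Set.indicator {k : ℕ | m ≤ k} (fun k => ENNReal.ofReal (((H:ℝ) - m + k)^2)) k
        ∂(binomialMeasure n (1/(n:ℝ)))
      ≤ ENNReal.ofReal ((H:ℝ)^2 + 3*H) * binomialMeasure n (1/(n:ℝ)) {k : ℕ | m ≤ k} := by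
  classical
  set C : Set ℕ := {k : ℕ | m ≤ k} with hC
  set wE : ℕ → ℝ≥0∞ := fun k => ENNReal.ofReal (W n k) with hwE
  set R : ℕ → ℝ := fun j => 2*(H:ℝ)*(j:ℝ) + (j:ℝ)^2 with hR
  have hRnn : ∀ j, 0 ≤ R j := fun j => by rw [hR]; positivity
  set F : ℕ → ℝ≥0∞ := fun k => Set.indicator C
      (fun k => wE m * ENNReal.ofReal ((1/3:ℝ)^(k-m) * R (k-m))) k with hF
  rw [binom_lintegral, binom_measure]
  have hsplit : ∀ k, wE k * Set.indicator C (fun k => ENNReal.ofReal (((H:ℝ) - m + k)^2)) k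
      ≤ ENNReal.ofReal ((H:ℝ)^2) * (wE k * C.indicator 1 k) + F k := by
    intro k
    by_cases hk : k ∈ C
    · simp only [hF, Set.indicator_of_mem hk]
      have hkm : m ≤ k := hk
      have hkeq : k = m + (k - m) := by omega
      have hkj : (k:ℝ) = (m:ℝ) + ((k-m:ℕ):ℝ) := by
        conv_lhs => rw [hkeq]
        push_cast; ring
      have hval : ((H:ℝ) - m + k)^2 = (H:ℝ)^2 + R (k-m) := by
        rw [hkj, hR]; ring
      rw [hval, ENNReal.ofReal_add (by positivity) (hRnn _), mul_add]
      refine add_le_add (le_of_eq ?_) ?_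
      · rw [Pi.one_apply, mul_one, mul_comm]
      · have hWle : wE k ≤ wE m * ENNReal.ofReal ((1/3:ℝ)^(k-m)) := by
          rw [hwE, ← ENNReal.ofReal_mul (W_nonneg hn m)]
          apply ENNReal.ofReal_le_ofReal
          conv_lhs => rw [hkeq]
          exact W_add_le hn hm2 _
        calc wE k * ENNReal.ofReal (R (k-m))
            ≤ wE m * ENNReal.ofReal ((1/3:ℝ)^(k-m)) * ENNReal.ofReal (R (k-m)) :=
              mul_le_mul_left hWle _
          _ = wE m * ENNReal.ofReal ((1/3:ℝ)^(k-m) * R (k-m)) := by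
              rw [mul_assoc, ← ENNReal.ofReal_mul (by positivity)]
    · simp only [hF, Set.indicator_of_notMem hk]
      simp
  have hFsum : ∑' k, F k ≤ ENNReal.ofReal (3*(H:ℝ)) * (∑' k, wE k * C.indicator 1 k) := by
    have hinj : Function.Injective (fun j : ℕ => m + j) := add_right_injective m
    have hsupp : Function.support F ⊆ Set.range (fun j : ℕ => m + j) := by
      intro k hk
      by_contra hr
      have hkm : ¬ m ≤ k := by
        intro h
        exact hr ⟨k - m, Nat.add_sub_cancel' h⟩
      exact hk (Set.indicator_of_notMem hkm _)
    have hre : ∑' j : ℕ, F (m + j) = ∑' k, F k := hinj.tsum_eq hsupp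
    have hFval : ∀ j : ℕ, F (m + j) = wE m * ENNReal.ofReal ((1/3:ℝ)^j * R j) := by
      intro j
      have hmem : m + j ∈ C := Nat.le_add_right m j
      simp only [hF, Set.indicator_of_mem hmem, Nat.add_sub_cancel_left]
    calc ∑' k, F k = ∑' j : ℕ, F (m + j) := hre.symm
      _ = wE m * ∑' j : ℕ, ENNReal.ofReal ((1/3:ℝ)^j * R j) := by
          simp_rw [hFval]; rw [ENNReal.tsum_mul_left]
      _ ≤ wE m * ENNReal.ofReal (3*(H:ℝ)) := mul_le_mul_right (series_bound hH) _
      _ ≤ (∑' k, wE k * C.indicator 1 k) * ENNReal.ofReal (3*(H:ℝ)) := by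
          refine mul_le_mul_left ?_ _
          have hmC : m ∈ C := le_refl m
          have : wE m = wE m * C.indicator 1 m := by
            rw [Set.indicator_of_mem hmC, Pi.one_apply, mul_one]
          rw [this]
          exact ENNReal.le_tsum m
      _ = ENNReal.ofReal (3*(H:ℝ)) * (∑' k, wE k * C.indicator 1 k) := mul_comm _ _
  calc ∑' k, wE k * Set.indicator C (fun k => ENNReal.ofReal (((H:ℝ) - m + k)^2)) k
      ≤ ∑' k, (ENNReal.ofReal ((H:ℝ)^2) * (wE k * C.indicator 1 k) + F k) :=
        ENNReal.tsum_le_tsum hsplit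
    _ = ENNReal.ofReal ((H:ℝ)^2) * (∑' k, wE k * C.indicator 1 k) + ∑' k, F k := by
        rw [ENNReal.tsum_add, ENNReal.tsum_mul_left]
    _ ≤ ENNReal.ofReal ((H:ℝ)^2) * (∑' k, wE k * C.indicator 1 k)
        + ENNReal.ofReal (3*(H:ℝ)) * (∑' k, wE k * C.indicator 1 k) :=
        add_le_add (le_refl _) hFsum
    _ = ENNReal.ofReal ((H:ℝ)^2 + 3*H) * ∑' k, wE k * C.indicator 1 k := by
        rw [ENNReal.ofReal_add (by positivity) (by positivity), add_mul]

end NPaux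

/-- The random walk `S_t = 1 + ∑_{i=1}^t (ξ_i - 1)`. -/
def walk {Ω : Type*} (ξ : ℕ → Ω → ℕ) (t : ℕ) (ω : Ω) : ℤ :=
  1 + ∑ i ∈ Finset.Icc 1 t, ((ξ i ω : ℤ) - 1)

/-- The stopping time `γ = min {t ≥ 1 : S_t ≥ H or S_t = 0}`. -/
noncomputable def hitTime {Ω : Type*} (ξ : ℕ → Ω → ℕ) (H : ℕ) (ω : Ω) : ℕ :=
  sInf {t | 1 ≤ t ∧ ((H : ℤ) ≤ walk ξ t ω ∨ walk ξ t ω = 0)}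

namespace NPaux

variable {Ω : Type*} [MeasurableSpace Ω] (ξ : ℕ → Ω → ℕ)

lemma walk_zero (ω : Ω) : walk ξ 0 ω = 1 := by simp [walk]

lemma walk_succ (t : ℕ) (ω : Ω) : walk ξ (t+1) ω = walk ξ t ω + (ξ (t+1) ω : ℤ) - 1 := by
  rw [walk, walk, Finset.sum_Icc_succ_top (by omega : 1 ≤ t + 1)]
  ring

lemma walk_measurable (hmeas : ∀ i, Measurable (ξ i)) (t : ℕ) : Measurable (walk ξ t) := by
  apply Measurable.add measurable_const
  apply Finset.measurable_sum
  intro i _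
  exact (measurable_of_countable (fun k : ℕ => (k:ℤ) - 1)).comp (hmeas i)

/-- The defining property of the hitting set. -/
def Pev (H : ℕ) (u : ℕ) (ω : Ω) : Prop :=
  1 ≤ u ∧ ((H : ℤ) ≤ walk ξ u ω ∨ walk ξ u ω = 0)

lemma hitTime_eq_iff {H t : ℕ} (ht : 1 ≤ t) (ω : Ω) :
    hitTime ξ H ω = t ↔ (Pev ξ H t ω ∧ ∀ u, u < t → ¬ Pev ξ H u ω) := by
  constructor
  · intro h
    have hne : {u | Pev ξ H u ω}.Nonempty := by
      by_contra hemp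
      rw [Set.not_nonempty_iff_eq_empty] at hemp
      rw [hitTime] at h
      rw [show {t | 1 ≤ t ∧ ((H : ℤ) ≤ walk ξ t ω ∨ walk ξ t ω = 0)} = {u | Pev ξ H u ω} from rfl,
        hemp, Nat.sInf_empty] at h
      omega
    have hmem := Nat.sInf_mem hne
    rw [show sInf {u | Pev ξ H u ω} = hitTime ξ H ω from rfl, h] at hmem
    refine ⟨hmem, fun u hu hPu => ?_⟩
    have : hitTime ξ H ω ≤ u := Nat.sInf_le hPu
    omega
  · rintro ⟨h1, h2⟩
    have hle : hitTime ξ H ω ≤ t := Nat.sInf_le h1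
    have hge : t ≤ hitTime ξ H ω := by
      by_contra hlt
      push_neg at hlt
      have hne : {u | Pev ξ H u ω}.Nonempty := ⟨t, h1⟩
      have hmem := Nat.sInf_mem hne
      exact h2 _ hlt hmem
    omega

lemma hitTime_measurable (hmeas : ∀ i, Measurable (ξ i)) (H : ℕ) :
    Measurable (hitTime ξ H) := by
  have hPmeas : ∀ u, MeasurableSet {ω : Ω | Pev ξ H u ω} := by
    intro u
    have : {ω : Ω | Pev ξ H u ω}
        = {ω | 1 ≤ u} ∩ (walk ξ u ⁻¹' {z | (H:ℤ) ≤ z ∨ z = 0}) := by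
      ext ω; exact Iff.rfl
    rw [this]
    refine MeasurableSet.inter ?_ ((walk_measurable ξ hmeas u) MeasurableSet.of_discrete)
    by_cases h : 1 ≤ u <;> simp [h]
  apply measurable_to_countable'
  intro t
  rcases Nat.eq_zero_or_pos t with rfl | ht
  · have : hitTime ξ H ⁻¹' {0} = ⋂ u, {ω : Ω | ¬ Pev ξ H u ω} := by
      ext ω
      simp only [Set.mem_preimage, Set.mem_singleton_iff, Set.mem_iInter, Set.mem_setOf_eq]
      constructor
      · intro h u hPu
        have hle : hitTime ξ H ω ≤ u := Nat.sInf_le hPu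
        have h1 : 1 ≤ u := hPu.1
        -- sInf = 0 but set nonempty means 0 ∈ set; but Pev 0 is false
        have hne : {v | Pev ξ H v ω}.Nonempty := ⟨u, hPu⟩
        have hmem := Nat.sInf_mem hne
        rw [show sInf {v | Pev ξ H v ω} = hitTime ξ H ω from rfl, h] at hmem
        exact absurd hmem.1 (by omega)
      · intro h
        have : {v | Pev ξ H v ω} = ∅ := by
          ext v; simp only [Set.mem_setOf_eq, Set.mem_empty_iff_false, iff_false]
          exact h v
        rw [hitTime, show {t | 1 ≤ t ∧ ((H : ℤ) ≤ walk ξ t ω ∨ walk ξ t ω = 0)}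
          = {v | Pev ξ H v ω} from rfl, this, Nat.sInf_empty]
    rw [this]
    exact MeasurableSet.iInter fun u => (hPmeas u).compl
  · have : hitTime ξ H ⁻¹' {t} = {ω : Ω | Pev ξ H t ω} ∩ ⋂ u, ⋂ (_ : u < t), {ω | ¬ Pev ξ H u ω} := by
      ext ω
      rw [Set.mem_preimage, Set.mem_singleton_iff, hitTime_eq_iff ξ ht]
      simp only [Set.mem_inter_iff, Set.mem_setOf_eq, Set.mem_iInter]
    rw [this]
    exact (hPmeas t).inter (MeasurableSet.iInter fun u =>
      MeasurableSet.iInter fun _ => (hPmeas u).compl)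

lemma walkAtHit_measurable (hmeas : ∀ i, Measurable (ξ i)) (H : ℕ) :
    Measurable (fun ω => walk ξ (hitTime ξ H ω) ω) := by
  apply measurable_to_countable'
  intro z
  have : (fun ω => walk ξ (hitTime ξ H ω) ω) ⁻¹' {z}
      = ⋃ t, (hitTime ξ H ⁻¹' {t}) ∩ (walk ξ t ⁻¹' {z}) := by
    ext ω
    simp only [Set.mem_preimage, Set.mem_singleton_iff, Set.mem_iUnion, Set.mem_inter_iff]
    constructor
    · intro h; exact ⟨hitTime ξ H ω, rfl, h⟩
    · rintro ⟨t, rfl, h⟩; exact h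
  rw [this]
  exact MeasurableSet.iUnion fun t =>
    ((hitTime_measurable ξ hmeas H) (MeasurableSet.singleton t)).inter
      ((walk_measurable ξ hmeas t) (MeasurableSet.singleton z))

end NPaux

namespace NPaux

variable {Ω : Type*} [MeasurableSpace Ω] (ξ : ℕ → Ω → ℕ)

/-- Walk computed from a bare sequence. -/
def wv (u : ℕ) (v : ℕ → ℕ) : ℤ := 1 + ∑ i ∈ Finset.Icc 1 u, ((v i : ℤ) - 1)

lemma wv_measurable (u : ℕ) : Measurable (wv u) := by
  apply Measurable.add measurable_const
  apply Finset.measurable_sum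
  intro i _
  exact (measurable_of_countable (fun k : ℕ => (k:ℤ) - 1)).comp (measurable_pi_apply i)

lemma wv_trunc (t u : ℕ) (hu : u < t) (ω : Ω) :
    wv u (fun i => if i < t then ξ i ω else 0) = walk ξ u ω := by
  rw [wv, walk]
  congr 1
  apply Finset.sum_congr rfl
  intro i hi
  rw [Finset.mem_Icc] at hi
  rw [if_pos (by omega)]

lemma trunc_measurable (hmeas : ∀ i, Measurable (ξ i)) (t : ℕ) :
    Measurable (fun ω => (fun i => if i < t then ξ i ω else 0 : ℕ → ℕ)) := by
  apply measurable_pi_lambda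
  intro i
  by_cases h : i < t
  · simpa [h] using hmeas i
  · simp [h]

lemma trunc_indepFun {μ : Measure Ω} (hmeas : ∀ i, Measurable (ξ i))
    (hindep : iIndepFun ξ μ) (t : ℕ) :
    IndepFun (fun ω => (fun i => if i < t then ξ i ω else 0 : ℕ → ℕ)) (ξ t) μ := by
  classical
  have hdisj : Disjoint (Finset.range t) ({t} : Finset ℕ) := by
    simp only [Finset.disjoint_left, Finset.mem_range, Finset.mem_singleton]
    omega
  have h0 := hindep.indepFun_finset (Finset.range t) {t} hdisj hmeas
  set g1 : ((i : (Finset.range t : Finset ℕ)) → ℕ) → (ℕ → ℕ) :=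
    fun v i => if h : i ∈ Finset.range t then v ⟨i, h⟩ else 0 with hg1
  set g2 : ((i : ({t} : Finset ℕ)) → ℕ) → ℕ := fun v => v ⟨t, Finset.mem_singleton_self t⟩
    with hg2
  have mg1 : Measurable g1 := by
    apply measurable_pi_lambda
    intro i
    by_cases h : i ∈ Finset.range t
    · simp only [hg1, dif_pos h]
      exact measurable_pi_apply _
    · simp only [hg1, dif_neg h]
      exact measurable_const
  have mg2 : Measurable g2 := measurable_pi_apply _
  have hcomp := h0.comp mg1 mg2
  have he1 : (g1 ∘ fun ω (i : (Finset.range t : Finset ℕ)) => ξ i ω)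
      = fun ω => (fun i => if i < t then ξ i ω else 0 : ℕ → ℕ) := by
    funext ω
    funext i
    by_cases h : i < t
    · simp [hg1, Function.comp, Finset.mem_range, h]
    · simp [hg1, Function.comp, Finset.mem_range, h]
  have he2 : (g2 ∘ fun ω (i : ({t} : Finset ℕ)) => ξ i ω) = ξ t := rfl
  rwa [he1, he2] at hcomp

end NPaux

namespace NPaux

variable {Ω : Type*} [MeasurableSpace Ω] (ξ : ℕ → Ω → ℕ)

lemma walk_pred (t : ℕ) (ht : 1 ≤ t) (ω : Ω) :
    walk ξ t ω = walk ξ (t-1) ω + (ξ t ω : ℤ) - 1 := by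
  obtain ⟨u, rfl⟩ : ∃ u, t = u + 1 := ⟨t - 1, by omega⟩
  simpa using walk_succ ξ u ω

end NPaux

open NPaux in
/-- **Inequality (3), Nachmias–Peres.** For the Bin(n,1/n) walk and `2 ≤ H ≤ n`,
`E[S_γ² | S_γ ≥ H] ≤ H² + 3H`. -/
theorem second_moment_at_hit {Ω : Type*} [MeasurableSpace Ω] (μ : Measure Ω)
    [IsProbabilityMeasure μ] (n : ℕ) (hn : 2 ≤ n)
    (ξ : ℕ → Ω → ℕ) (hmeas : ∀ i, Measurable (ξ i))
    (hdist : ∀ i, μ.map (ξ i) = binomialMeasure n (1 / (n : ℝ)))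
    (hindep : iIndepFun ξ μ)
    (H : ℕ) (hH2 : 2 ≤ H) (hHn : H ≤ n) :
    ∫ ω, ((walk ξ (hitTime ξ H ω) ω : ℤ) : ℝ) ^ 2
        ∂(μ[|{ω | (H : ℤ) ≤ walk ξ (hitTime ξ H ω) ω}]) ≤
      (H : ℝ) ^ 2 + 3 * H := by
  classical
  set G : Ω → ℤ := fun ω => walk ξ (hitTime ξ H ω) ω with hG
  set A : Set Ω := {ω | (H : ℤ) ≤ walk ξ (hitTime ξ H ω) ω} with hA
  have hGmeas : Measurable G := walkAtHit_measurable ξ hmeas H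
  have hAG : A = G ⁻¹' {z : ℤ | (H:ℤ) ≤ z} := rfl
  have hAmeas : MeasurableSet A := by
    rw [hAG]; exact hGmeas MeasurableSet.of_discrete
  set K : ℝ≥0∞ := ENNReal.ofReal ((H:ℝ)^2 + 3*H) with hK
  -- the decomposition events
  set D : ℕ × ℕ → Set Ω := fun p =>
    if 1 ≤ p.1 ∧ 1 ≤ p.2 ∧ p.2 + 1 ≤ H then
      {ω | (∀ u, 1 ≤ u → u < p.1 → (0 < walk ξ u ω ∧ walk ξ u ω < (H:ℤ)))
          ∧ walk ξ (p.1 - 1) ω = (p.2 : ℤ)}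
        ∩ (ξ p.1) ⁻¹' {k : ℕ | (H:ℤ) ≤ (p.2:ℤ) - 1 + (k:ℤ)}
    else ∅ with hD
  have hDmem : ∀ t s ω, ω ∈ D (t,s) ↔ (1 ≤ t ∧ 1 ≤ s ∧ s + 1 ≤ H
      ∧ (∀ u, 1 ≤ u → u < t → (0 < walk ξ u ω ∧ walk ξ u ω < (H:ℤ)))
      ∧ walk ξ (t-1) ω = (s:ℤ) ∧ (H:ℤ) ≤ (s:ℤ) - 1 + (ξ t ω : ℤ)) := by
    intro t s ω
    simp only [hD]
    by_cases hval : 1 ≤ t ∧ 1 ≤ s ∧ s + 1 ≤ H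
    · rw [if_pos hval]
      simp only [Set.mem_inter_iff, Set.mem_setOf_eq, Set.mem_preimage]
      tauto
    · rw [if_neg hval]
      simp only [Set.mem_empty_iff_false, false_iff]
      tauto
  have hwalk_at : ∀ t s ω, ω ∈ D (t,s) → walk ξ t ω = (s:ℤ) - 1 + (ξ t ω : ℤ) := by
    intro t s ω hω
    rw [hDmem] at hω
    obtain ⟨ht, _, _, _, hprev, _⟩ := hω
    rw [walk_pred ξ t ht, hprev]
    ring
  have hγD : ∀ t s ω, ω ∈ D (t,s) → hitTime ξ H ω = t := by
    intro t s ω hω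
    have hω' := hω
    rw [hDmem] at hω'
    obtain ⟨ht, hs1, hsH, hmid, hprev, hcross⟩ := hω'
    rw [hitTime_eq_iff ξ ht]
    constructor
    · exact ⟨ht, Or.inl (by rw [hwalk_at t s ω hω]; exact hcross)⟩
    · intro u hu hPu
      obtain ⟨hu1, hPu2⟩ := hPu
      obtain ⟨h1, h2⟩ := hmid u hu1 hu
      rcases hPu2 with h | h
      · omega
      · omega
  -- A is the disjoint union of the D's
  have hGD : ∀ t s ω, ω ∈ D (t,s) → G ω = (s:ℤ) - 1 + (ξ t ω : ℤ) := by
    intro t s ω hω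
    rw [hG]
    show walk ξ (hitTime ξ H ω) ω = _
    rw [hγD t s ω hω]
    exact hwalk_at t s ω hω
  have hAunion : A = ⋃ p : ℕ × ℕ, D p := by
    ext ω
    constructor
    · intro hω
      have hωA : (H:ℤ) ≤ walk ξ (hitTime ξ H ω) ω := hω
      set t := hitTime ξ H ω with htdef
      have ht1 : 1 ≤ t := by
        by_contra h
        have ht0 : t = 0 := by omega
        rw [ht0, walk_zero] at hωA
        omega
      have hmemt := (hitTime_eq_iff ξ ht1 ω).mp rfl
      have hpos : ∀ u, u < t → 0 < walk ξ u ω := by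
        intro u
        induction u with
        | zero => intro _; rw [walk_zero]; norm_num
        | succ u ih =>
          intro hu
          have h1 := ih (by omega)
          have hnP := hmemt.2 (u+1) hu
          have hnP' : ¬((H:ℤ) ≤ walk ξ (u+1) ω ∨ walk ξ (u+1) ω = 0) :=
            fun hc => hnP ⟨by omega, hc⟩
          have hne : walk ξ (u+1) ω ≠ 0 := fun h => hnP' (Or.inr h)
          have hstep := walk_succ ξ u ω
          have hxi : (0:ℤ) ≤ (ξ (u+1) ω : ℤ) := Int.ofNat_nonneg _
          omega
      have hwt : (H:ℤ) ≤ walk ξ t ω := hωA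
      have hprev_pos : 0 < walk ξ (t-1) ω := hpos (t-1) (by omega)
      have hprev_lt : walk ξ (t-1) ω < (H:ℤ) := by
        rcases Nat.eq_or_lt_of_le ht1 with h | h
        · rw [← h]
          simp only [Nat.sub_self, walk_zero]
          omega
        · have hnP := hmemt.2 (t-1) (by omega)
          have : ¬((H:ℤ) ≤ walk ξ (t-1) ω ∨ walk ξ (t-1) ω = 0) :=
            fun hc => hnP ⟨by omega, hc⟩
          omega
      set s : ℕ := (walk ξ (t-1) ω).toNat with hsdef
      have hsval : walk ξ (t-1) ω = (s:ℤ) := (Int.toNat_of_nonneg hprev_pos.le).symm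
      have hs1 : 1 ≤ s := by omega
      have hsH : s + 1 ≤ H := by omega
      refine Set.mem_iUnion.mpr ⟨(t, s), ?_⟩
      rw [hDmem]
      refine ⟨ht1, hs1, hsH, ?_, hsval, ?_⟩
      · intro u hu1 hu2
        refine ⟨hpos u hu2, ?_⟩
        have hnP := hmemt.2 u hu2
        have : ¬((H:ℤ) ≤ walk ξ u ω ∨ walk ξ u ω = 0) := fun hc => hnP ⟨hu1, hc⟩
        omega
      · have hstep := walk_pred ξ t ht1 ω
        rw [hsval] at hstep
        omega
    · intro hω
      obtain ⟨p, hp⟩ := Set.mem_iUnion.mp hω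
      obtain ⟨t, s⟩ := p
      have h1 := hGD t s _ hp
      have h2 := hp
      rw [hDmem] at h2
      show (H:ℤ) ≤ walk ξ (hitTime ξ H ω) ω
      have : walk ξ (hitTime ξ H ω) ω = (s:ℤ) - 1 + (ξ t ω : ℤ) := h1
      rw [this]
      exact h2.2.2.2.2.2
  have hdisj : Pairwise (Function.onFun Disjoint D) := by
    intro p q hpq
    obtain ⟨t, s⟩ := p
    obtain ⟨t', s'⟩ := q
    rw [Function.onFun, Set.disjoint_left]
    intro ω h1 h2
    have h1' := h1; have h2' := h2
    rw [hDmem] at h1' h2'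
    rcases lt_trichotomy t t' with hlt | heq | hgt
    · have hcross : (H:ℤ) ≤ walk ξ t ω := by
        rw [hwalk_at t s ω h1]; exact h1'.2.2.2.2.2
      have := (h2'.2.2.2.1 t h1'.1 hlt).2
      omega
    · subst heq
      have hss : s ≠ s' := by
        intro h; apply hpq; rw [h]
      have e1 := h1'.2.2.2.2.1
      have e2 := h2'.2.2.2.2.1
      rw [e1] at e2
      have : s = s' := by exact_mod_cast e2
      exact hss this
    · have hcross : (H:ℤ) ≤ walk ξ t' ω := by
        rw [hwalk_at t' s' ω h2]; exact h2'.2.2.2.2.2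
      have := (h1'.2.2.2.1 t' h2'.1 hgt).2
      omega
  have hDmeasSet : ∀ p, MeasurableSet (D p) := by
    rintro ⟨t, s⟩
    simp only [hD]
    by_cases hval : 1 ≤ t ∧ 1 ≤ s ∧ s + 1 ≤ H
    · rw [if_pos hval]
      refine MeasurableSet.inter ?_ ((hmeas t) MeasurableSet.of_discrete)
      have : {ω | (∀ u, 1 ≤ u → u < t → (0 < walk ξ u ω ∧ walk ξ u ω < (H:ℤ)))
          ∧ walk ξ (t - 1) ω = (s : ℤ)}
          = (⋂ u, ⋂ (_ : 1 ≤ u), ⋂ (_ : u < t),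
              (walk ξ u ⁻¹' {z : ℤ | 0 < z} ∩ walk ξ u ⁻¹' {z : ℤ | z < (H:ℤ)}))
            ∩ walk ξ (t-1) ⁻¹' {(s:ℤ)} := by
        ext ω
        simp only [Set.mem_setOf_eq, Set.mem_inter_iff, Set.mem_iInter, Set.mem_preimage,
          Set.mem_singleton_iff]
      rw [this]
      refine MeasurableSet.inter ?_ ((walk_measurable ξ hmeas (t-1)) (MeasurableSet.singleton _))
      refine MeasurableSet.iInter fun u => MeasurableSet.iInter fun _ =>
        MeasurableSet.iInter fun _ => MeasurableSet.inter ?_ ?_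
      · exact (walk_measurable ξ hmeas u) MeasurableSet.of_discrete
      · exact (walk_measurable ξ hmeas u) MeasurableSet.of_discrete
    · rw [if_neg hval]; exact MeasurableSet.empty
  -- the key per-piece bound
  have hbound : ∀ p : ℕ × ℕ,
      ∫⁻ ω in D p, ENNReal.ofReal ((G ω : ℝ)^2) ∂μ ≤ K * μ (D p) := by
    rintro ⟨t, s⟩
    by_cases hval : 1 ≤ t ∧ 1 ≤ s ∧ s + 1 ≤ H
    · obtain ⟨ht, hs1, hsH⟩ := hval
      set B : Set Ω := {ω | (∀ u, 1 ≤ u → u < t → (0 < walk ξ u ω ∧ walk ξ u ω < (H:ℤ)))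
          ∧ walk ξ (t - 1) ω = (s : ℤ)} with hB
      set Cset : Set ℕ := {k : ℕ | (H:ℤ) ≤ (s:ℤ) - 1 + (k:ℤ)} with hCset
      have hDeq : D (t,s) = B ∩ (ξ t) ⁻¹' Cset := by
        simp only [hD]
        rw [if_pos ⟨ht, hs1, hsH⟩]
      set m : ℕ := H + 1 - s with hm
      have hm2 : 2 ≤ m := by omega
      have hmH : m ≤ H := by omega
      have hCeq : Cset = {k : ℕ | m ≤ k} := by
        ext k
        simp only [hCset, Set.mem_setOf_eq]
        omega
      set T : Ω → (ℕ → ℕ) := fun ω => (fun i => if i < t then ξ i ω else 0) with hT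
      have hTmeas : Measurable T := trunc_measurable ξ hmeas t
      have hTindep : IndepFun T (ξ t) μ := trunc_indepFun ξ hmeas hindep t
      set E : Set (ℕ → ℕ) := {v | (∀ u, 1 ≤ u → u < t → (0 < wv u v ∧ wv u v < (H:ℤ)))
          ∧ wv (t-1) v = (s:ℤ)} with hE
      have hEmeas : MeasurableSet E := by
        have : E = (⋂ u, ⋂ (_ : 1 ≤ u), ⋂ (_ : u < t),
              (wv u ⁻¹' {z : ℤ | 0 < z} ∩ wv u ⁻¹' {z : ℤ | z < (H:ℤ)}))
            ∩ wv (t-1) ⁻¹' {(s:ℤ)} := by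
          ext v
          simp only [hE, Set.mem_setOf_eq, Set.mem_inter_iff, Set.mem_iInter, Set.mem_preimage,
            Set.mem_singleton_iff]
        rw [this]
        refine MeasurableSet.inter ?_ ((wv_measurable (t-1)) (MeasurableSet.singleton _))
        refine MeasurableSet.iInter fun u => MeasurableSet.iInter fun _ =>
          MeasurableSet.iInter fun _ => MeasurableSet.inter ?_ ?_
        · exact (wv_measurable u) MeasurableSet.of_discrete
        · exact (wv_measurable u) MeasurableSet.of_discrete
      have hBeq : B = T ⁻¹' E := by
        ext ω
        simp only [hB, hE, Set.mem_preimage, Set.mem_setOf_eq]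
        constructor
        · rintro ⟨h1, h2⟩
          refine ⟨fun u hu1 hu2 => ?_, ?_⟩
          · rw [hT]; rw [wv_trunc ξ t u hu2]; exact h1 u hu1 hu2
          · rw [hT]; rw [wv_trunc ξ t (t-1) (by omega)]; exact h2
        · rintro ⟨h1, h2⟩
          rw [hT] at h1 h2
          refine ⟨fun u hu1 hu2 => ?_, ?_⟩
          · have := h1 u hu1 hu2
            rwa [wv_trunc ξ t u hu2] at this
          · rwa [wv_trunc ξ t (t-1) (by omega)] at h2
      set φ : ℕ → ℝ≥0∞ := fun k => ENNReal.ofReal (((s:ℝ) - 1 + k)^2) with hφ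
      have hGon : ∀ ω ∈ D (t,s), ENNReal.ofReal ((G ω : ℝ)^2) = φ (ξ t ω) := by
        intro ω hω
        have := hGD t s ω hω
        rw [hφ, this]
        congr 1
        push_cast
        ring
      have step1 : ∫⁻ ω in D (t,s), ENNReal.ofReal ((G ω : ℝ)^2) ∂μ
          = ∫⁻ ω in D (t,s), φ (ξ t ω) ∂μ :=
        setLIntegral_congr_fun (hDmeasSet (t,s)) hGon
      have step2 : ∫⁻ ω in D (t,s), φ (ξ t ω) ∂μ
          = ∫⁻ ω, (E.indicator (1 : (ℕ → ℕ) → ℝ≥0∞) (T ω)) * (Cset.indicator φ (ξ t ω)) ∂μ := by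
        rw [← lintegral_indicator (hDmeasSet (t,s))]
        congr 1
        funext ω
        rw [hDeq, hBeq]
        by_cases h1 : ω ∈ T ⁻¹' E
        · by_cases h2 : ξ t ω ∈ Cset
          · rw [Set.indicator_of_mem (Set.mem_inter h1 h2),
              Set.indicator_of_mem (Set.mem_preimage.mp h1), Set.indicator_of_mem h2]
            simp
          · rw [Set.indicator_of_notMem (fun hc => h2 hc.2), Set.indicator_of_notMem h2]
            simp
        · rw [Set.indicator_of_notMem (fun hc => h1 hc.1),
            Set.indicator_of_notMem (fun hc : T ω ∈ E => h1 hc)]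
          simp
      have hf1meas : Measurable (fun ω => E.indicator (1 : (ℕ → ℕ) → ℝ≥0∞) (T ω)) :=
        (measurable_one.indicator hEmeas).comp hTmeas
      have hf2meas : Measurable (fun ω => Cset.indicator φ (ξ t ω)) :=
        (measurable_of_countable (Cset.indicator φ)).comp (hmeas t)
      have hIF : IndepFun (fun ω => E.indicator (1 : (ℕ → ℕ) → ℝ≥0∞) (T ω))
          (fun ω => Cset.indicator φ (ξ t ω)) μ :=
        hTindep.comp (measurable_one.indicator hEmeas) (measurable_of_countable (Cset.indicator φ))
      have step3 : ∫⁻ ω, (E.indicator (1 : (ℕ → ℕ) → ℝ≥0∞) (T ω))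
            * (Cset.indicator φ (ξ t ω)) ∂μ
          = (∫⁻ ω, E.indicator (1 : (ℕ → ℕ) → ℝ≥0∞) (T ω) ∂μ)
            * ∫⁻ ω, Cset.indicator φ (ξ t ω) ∂μ :=
        lintegral_mul_eq_lintegral_mul_lintegral_of_indepFun''
          hf1meas.aemeasurable hf2meas.aemeasurable hIF
      have step4 : ∫⁻ ω, E.indicator (1 : (ℕ → ℕ) → ℝ≥0∞) (T ω) ∂μ = μ B := by
        have : (fun ω => E.indicator (1 : (ℕ → ℕ) → ℝ≥0∞) (T ω))
            = (T ⁻¹' E).indicator (fun _ => (1:ℝ≥0∞)) := by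
          funext ω
          by_cases h : ω ∈ T ⁻¹' E
          · rw [Set.indicator_of_mem (Set.mem_preimage.mp h), Set.indicator_of_mem h]
            rfl
          · rw [Set.indicator_of_notMem (fun hc : T ω ∈ E => h hc),
              Set.indicator_of_notMem h]
        rw [this, lintegral_indicator_const (hEmeas.preimage hTmeas), one_mul, ← hBeq]
      have step5 : ∫⁻ ω, Cset.indicator φ (ξ t ω) ∂μ
          = ∫⁻ k, Cset.indicator φ k ∂(binomialMeasure n (1/(n:ℝ))) := by
        rw [← hdist t, lintegral_map (measurable_of_countable (Cset.indicator φ)) (hmeas t)]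
      have hmR : (m:ℝ) = (H:ℝ) + 1 - (s:ℝ) := by
        rw [hm]
        push_cast [Nat.cast_sub (by omega : s ≤ H + 1)]
        ring
      have hφeq : Cset.indicator φ
          = Set.indicator {k : ℕ | m ≤ k} (fun k => ENNReal.ofReal (((H:ℝ) - m + k)^2)) := by
        rw [hCeq]
        apply Set.indicator_congr
        intro k _
        show ENNReal.ofReal (((s:ℝ) - 1 + (k:ℝ))^2) = ENNReal.ofReal (((H:ℝ) - (m:ℝ) + (k:ℝ))^2)
        congr 1
        rw [hmR]
        ring
      have step6 : ∫⁻ k, Cset.indicator φ k ∂(binomialMeasure n (1/(n:ℝ)))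
          ≤ K * binomialMeasure n (1/(n:ℝ)) Cset := by
        rw [hφeq, hCeq, hK]
        exact binom_tail hn hH2 hm2 hmH
      have hbinC : binomialMeasure n (1/(n:ℝ)) Cset = μ ((ξ t) ⁻¹' Cset) := by
        rw [← hdist t, Measure.map_apply (hmeas t) MeasurableSet.of_discrete]
      have hprod : μ B * μ ((ξ t) ⁻¹' Cset) = μ (D (t,s)) := by
        rw [hDeq, hBeq]
        exact (hTindep.measure_inter_preimage_eq_mul E Cset hEmeas MeasurableSet.of_discrete).symm
      calc ∫⁻ ω in D (t,s), ENNReal.ofReal ((G ω : ℝ)^2) ∂μ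
          = μ B * ∫⁻ k, Cset.indicator φ k ∂(binomialMeasure n (1/(n:ℝ))) := by
            rw [step1, step2, step3, step4, step5]
        _ ≤ μ B * (K * binomialMeasure n (1/(n:ℝ)) Cset) := mul_le_mul_right step6 _
        _ = K * (μ B * μ ((ξ t) ⁻¹' Cset)) := by rw [hbinC]; ring
        _ = K * μ (D (t,s)) := by rw [hprod]
    · have hDempty : D (t,s) = ∅ := by simp only [hD]; rw [if_neg hval]
      rw [hDempty]
      simp
  -- global bound
  have hAbound : ∫⁻ ω in A, ENNReal.ofReal ((G ω : ℝ)^2) ∂μ ≤ K * μ A := by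
    rw [hAunion, lintegral_iUnion hDmeasSet hdisj, measure_iUnion hdisj hDmeasSet,
      ENNReal.tsum_mul_left.symm]
    exact ENNReal.tsum_le_tsum hbound
  -- conclusion
  have hfmeas : Measurable (fun ω => ((G ω : ℤ) : ℝ)^2) :=
    (measurable_of_countable (fun z : ℤ => ((z:ℝ))^2)).comp hGmeas
  by_cases h0 : μ A = 0
  · rw [ProbabilityTheory.cond, Measure.restrict_eq_zero.mpr h0, smul_zero,
      integral_zero_measure]
    positivity
  · have h1 : μ A ≠ ⊤ := measure_ne_top μ A
    rw [ProbabilityTheory.cond, integral_smul_measure,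
      integral_eq_lintegral_of_nonneg_ae (Filter.Eventually.of_forall fun ω => sq_nonneg _)
        hfmeas.aestronglyMeasurable]
    have hKA : K * μ A ≠ ⊤ := ENNReal.mul_ne_top ENNReal.ofReal_ne_top h1
    have hle2 : (∫⁻ ω, ENNReal.ofReal (((G ω : ℤ):ℝ)^2) ∂(μ.restrict A)).toReal
        ≤ (K * μ A).toReal := ENNReal.toReal_mono hKA hAbound
    have hKnn : (0:ℝ) ≤ (H:ℝ)^2 + 3*H := by positivity
    have hKtoReal : K.toReal = (H:ℝ)^2 + 3*H := ENNReal.toReal_ofReal hKnn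
    have hAne : (μ A).toReal ≠ 0 := ENNReal.toReal_ne_zero.mpr ⟨h0, h1⟩
    rw [smul_eq_mul]
    calc ((μ A)⁻¹).toReal * (∫⁻ ω, ENNReal.ofReal (((G ω : ℤ):ℝ)^2) ∂(μ.restrict A)).toReal
        ≤ ((μ A)⁻¹).toReal * (K * μ A).toReal :=
          mul_le_mul_of_nonneg_left hle2 ENNReal.toReal_nonneg
      _ = ((μ A).toReal)⁻¹ * (K.toReal * (μ A).toReal) := by
          rw [ENNReal.toReal_inv, ENNReal.toReal_mul]
      _ = K.toReal := by field_simp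
      _ = (H:ℝ)^2 + 3*H := hKtoReal
end

section
/- Fix λ > 0. There exists N such that for all integers n ≥ N the following holds. Let (ξ_i)_{i≥1} be i.i.d. random variables with the Binomial(n, p) distribution, where p = (1 + λ·n^{-1/3})/n. Set S_0 = 1 and S_t = 1 + Σ_{i=1}^{t}(ξ_i − 1), let H = ⌈n^{1/3}⌉, and let γ = min{t ≥ 1 : S_t ≥ H or S_t = 0}. Then P(S_γ ≥ H) ≤ 4λ·n^{-1/3}/(1 − e^{−4λ}). -/
open MeasureTheory ProbabilityTheory
open scoped ENNReal

open Finset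
open scoped Classical

set_option linter.unusedSectionVars false

namespace NP

variable {Ω : Type} (ξ : ℕ → Ω → ℕ) (H : ℕ) (a : ℝ)

/-- Event: not yet stopped by time `t`. -/
def B (t : ℕ) : Set Ω :=
  {ω | ∀ s ∈ Finset.Icc 1 t, ¬((H : ℤ) ≤ walk ξ s ω ∨ walk ξ s ω = 0)}

/-- The stopped exponential process. -/
noncomputable def X : ℕ → Ω → ℝ≥0∞
  | 0 => fun _ => ENNReal.ofReal (Real.exp (-a))
  | (t+1) => fun ω => if ω ∈ B ξ H t
      then ENNReal.ofReal (Real.exp (-a * walk ξ (t+1) ω)) else X t ω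

variable {ξ H a}

lemma walk_zero (ω : Ω) : walk ξ 0 ω = 1 := by simp [walk]

lemma walk_succ (t : ℕ) (ω : Ω) :
    walk ξ (t+1) ω = walk ξ t ω + ((ξ (t+1) ω : ℤ) - 1) := by
  unfold walk
  rw [Finset.sum_Icc_succ_top (Nat.le_add_left 1 t)]
  ring

lemma B_mono {t u : ℕ} (h : t ≤ u) : B ξ H u ⊆ B ξ H t := by
  intro ω hω s hs
  exact hω s (Finset.mem_Icc.mpr ⟨(Finset.mem_Icc.mp hs).1, (Finset.mem_Icc.mp hs).2.trans h⟩)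

lemma B_pos {t : ℕ} {ω : Ω} (hω : ω ∈ B ξ H t) : 1 ≤ walk ξ t ω := by
  induction t with
  | zero => simp [walk_zero]
  | succ t ih =>
      have h1 : 1 ≤ walk ξ t ω := ih (B_mono (Nat.le_succ t) hω)
      have h2 : ¬((H : ℤ) ≤ walk ξ (t+1) ω ∨ walk ξ (t+1) ω = 0) :=
        hω (t+1) (Finset.mem_Icc.mpr ⟨Nat.le_add_left 1 t, le_rfl⟩)
      have h3 : walk ξ (t+1) ω ≠ 0 := fun h => h2 (Or.inr h)
      have h4 : (0:ℤ) ≤ (ξ (t+1) ω : ℤ) := Int.natCast_nonneg _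
      have h5 := walk_succ (ξ := ξ) t ω
      omega

lemma X_in {t : ℕ} {ω : Ω} (hω : ω ∈ B ξ H t) :
    X ξ H a t ω = ENNReal.ofReal (Real.exp (-a * walk ξ t ω)) := by
  cases t with
  | zero => simp [X, walk_zero]
  | succ t => simp only [X, if_pos (B_mono (Nat.le_succ t) hω)]

lemma hitTime_eq {t : ℕ} {ω : Ω} (hω : ω ∈ B ξ H t)
    (h : (H : ℤ) ≤ walk ξ (t+1) ω ∨ walk ξ (t+1) ω = 0) :
    hitTime ξ H ω = t + 1 := by
  have hmem : t + 1 ∈ {s | 1 ≤ s ∧ ((H : ℤ) ≤ walk ξ s ω ∨ walk ξ s ω = 0)} :=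
    ⟨Nat.le_add_left 1 t, h⟩
  apply le_antisymm (Nat.sInf_le hmem)
  apply le_csInf ⟨t+1, hmem⟩
  rintro s ⟨hs1, hs2⟩
  by_contra hlt
  exact hω s (Finset.mem_Icc.mpr ⟨hs1, by omega⟩) hs2

lemma X_out {t : ℕ} {ω : Ω} (hω : ω ∉ B ξ H t) :
    1 ≤ hitTime ξ H ω ∧ hitTime ξ H ω ≤ t ∧
    ((H : ℤ) ≤ walk ξ (hitTime ξ H ω) ω ∨ walk ξ (hitTime ξ H ω) ω = 0) ∧
    X ξ H a t ω = ENNReal.ofReal (Real.exp (-a * walk ξ (hitTime ξ H ω) ω)) := by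
  induction t with
  | zero => exact absurd (by intro s hs; simp at hs) hω
  | succ t ih =>
      by_cases hB : ω ∈ B ξ H t
      · have hcond : (H : ℤ) ≤ walk ξ (t+1) ω ∨ walk ξ (t+1) ω = 0 := by
          by_contra hc
          apply hω
          intro s hs
          rcases Finset.mem_Icc.mp hs with ⟨hs1, hs2⟩
          rcases Nat.lt_or_ge s (t+1) with h | h
          · exact hB s (Finset.mem_Icc.mpr ⟨hs1, by omega⟩)
          · have : s = t + 1 := by omega
            subst this; exact hc
        have ht := hitTime_eq hB hcond
        refine ⟨by omega, by omega, by rw [ht]; exact hcond, ?_⟩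
        rw [ht]
        simp only [X, if_pos hB]
      · obtain ⟨h1, h2, h3, h4⟩ := ih hB
        exact ⟨h1, h2.trans (Nat.le_succ t), h3, by simp only [X, if_neg hB]; exact h4⟩


variable [MeasurableSpace Ω]

lemma exp_cubic_bound {a : ℝ} (ha0 : 0 ≤ a) (ha1 : a ≤ 1) :
    Real.exp a ≤ 1 + a + a^2/2 + (2/9)*a^3 := by
  have h3 := Real.exp_bound' ha0 ha1 (n := 3) (by norm_num)
  simp only [Finset.sum_range_succ, Finset.sum_range_zero, Nat.factorial] at h3
  norm_num at h3
  nlinarith [h3]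

set_option maxHeartbeats 1000000 in
lemma analytic (n : ℕ) (a p : ℝ) (ha0 : 0 < a) (ha1 : a ≤ 1/2) (hp0 : 0 ≤ p)
    (hnp : (n : ℝ) * p = 1 + a/4) (hn : 18 ≤ n) :
    Real.exp (-a) ≤ (1 - p * (1 - Real.exp (-a))) ^ n := by
  have hncast : (18:ℝ) ≤ (n:ℝ) := by exact_mod_cast hn
  obtain ⟨u, hu⟩ : ∃ u : ℝ, u = 1 - Real.exp (-a) := ⟨_, rfl⟩
  obtain ⟨q, hq⟩ : ∃ q : ℝ, q = p * u := ⟨_, rfl⟩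
  have hEpos : 0 < Real.exp (-a) := Real.exp_pos _
  have hE : Real.exp (-a) = 1 - u := by rw [hu]; ring
  rw [hE]
  have hgoal_eq : 1 - p * (1 - (1 - u)) = 1 - q := by rw [hq]; ring
  rw [hgoal_eq]
  have hu0 : 0 ≤ u := by
    have h1 : Real.exp (-a) ≤ 1 := by
      rw [show (1:ℝ) = Real.exp 0 by simp]
      exact Real.exp_le_exp.mpr (by linarith)
    linarith [hE ▸ h1]
  have hu_le_a : u ≤ a := by
    have := Real.add_one_le_exp (-a)
    rw [hE] at this; linarith
  have hea : Real.exp a ≤ 1 + a + a^2/2 + (2/9)*a^3 :=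
    exp_cubic_bound ha0.le (by linarith)
  have hprod : Real.exp (-a) * Real.exp a = 1 := by
    rw [← Real.exp_add]; simp
  have hle : 1 ≤ (1 - u) * (1 + a + a^2/2 + (2/9)*a^3) := by
    calc (1:ℝ) = Real.exp (-a) * Real.exp a := hprod.symm
      _ ≤ Real.exp (-a) * (1 + a + a^2/2 + (2/9)*a^3) :=
          mul_le_mul_of_nonneg_left hea hEpos.le
      _ = (1 - u) * (1 + a + a^2/2 + (2/9)*a^3) := by rw [hE]
  have hD : (0:ℝ) < 1 + a + a^2/2 + (2/9)*a^3 := by nlinarith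
  have hu2 : u ≤ a - a^2/2 + (2/9)*a^3 := by
    have h6 : u * (1 + a + a^2/2 + (2/9)*a^3) ≤ (1 + a + a^2/2 + (2/9)*a^3) - 1 := by
      nlinarith [hle]
    have h7 : (1 + a + a^2/2 + (2/9)*a^3) - 1
        ≤ (a - a^2/2 + (2/9)*a^3) * (1 + a + a^2/2 + (2/9)*a^3) := by
      nlinarith [pow_nonneg ha0.le 4, pow_nonneg ha0.le 6]
    exact le_of_mul_le_mul_right (h6.trans h7) hD
  have hp_le : p ≤ 1/16 := by nlinarith
  have hq0 : 0 ≤ q := hq ▸ mul_nonneg hp0 hu0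
  have hq_half : q ≤ 1/2 := by nlinarith
  -- Step A : exp(-(q+q^2)) ≤ 1 - q
  have hA : Real.exp (-(q + q^2)) ≤ 1 - q := by
    have hx0 : (0:ℝ) ≤ q + q^2 := by nlinarith [sq_nonneg q]
    have h := Real.quadratic_le_exp_of_nonneg hx0
    have hpoly : 1 ≤ (1 - q) * (1 + (q + q^2) + (q + q^2)^2/2) := by
      nlinarith [mul_le_mul_of_nonneg_right hq_half (sq_nonneg q),
        mul_le_mul_of_nonneg_right hq_half (pow_nonneg hq0 3),
        mul_le_mul_of_nonneg_right hq_half (pow_nonneg hq0 4), hq0, sq_nonneg q]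
    have hq1 : (0:ℝ) ≤ 1 - q := by linarith
    have h2 : 1 ≤ (1 - q) * Real.exp (q + q^2) :=
      hpoly.trans (mul_le_mul_of_nonneg_left h hq1)
    have hprod2 : Real.exp (-(q + q^2)) * Real.exp (q + q^2) = 1 := by
      rw [← Real.exp_add]
      rw [show -(q + q^2) + (q + q^2) = 0 by ring, Real.exp_zero]
    nlinarith [Real.exp_pos (q + q^2), hprod2, h2]
  -- Step B
  have hB : Real.exp (-((n:ℝ) * (q + q^2))) ≤ (1 - q) ^ n := by
    have hpow := pow_le_pow_left₀ (Real.exp_pos (-(q + q^2))).le hA n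
    calc Real.exp (-((n:ℝ) * (q + q^2))) = Real.exp (-(q + q^2)) ^ n := by
          rw [← Real.exp_nat_mul]; congr 1; ring
      _ ≤ (1 - q) ^ n := hpow
  -- Step C
  have hC : (n:ℝ) * (q + q^2) ≤ a := by
    have key : (n:ℝ) * (q + q^2) = (1 + a/4) * u + ((1 + a/4) * p) * u^2 := by
      have h5 : (n:ℝ) * (q + q^2) = ((n:ℝ)*p) * u + (((n:ℝ)*p) * p) * u^2 := by
        rw [hq]; ring
      rw [h5, hnp]
    rw [key]
    nlinarith [hu2, hu_le_a, hu0, ha0.le, ha1, hp_le, hp0, sq_nonneg u, sq_nonneg a,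
      mul_nonneg hp0 (sq_nonneg u)]
  calc (1:ℝ) - u = Real.exp (-a) := hE.symm
    _ ≤ Real.exp (-((n:ℝ) * (q + q^2))) := Real.exp_le_exp.mpr (by linarith)
    _ ≤ (1 - q) ^ n := hB


lemma binom_lintegral (n : ℕ) (p a : ℝ) (hp0 : 0 ≤ p) (hp1 : p ≤ 1) :
    ∫⁻ k, ENNReal.ofReal (Real.exp (-a * ((k : ℝ) - 1))) ∂(binomialMeasure n p)
      = ENNReal.ofReal (Real.exp a * ((1 - p) + p * Real.exp (-a)) ^ n) := by
  have h1p : (0:ℝ) ≤ 1 - p := by linarith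
  have hterm : ∀ k : ℕ, (0:ℝ) ≤ (n.choose k : ℝ) * p ^ k * (1 - p) ^ (n - k) := fun k =>
    mul_nonneg (mul_nonneg (Nat.cast_nonneg _) (pow_nonneg hp0 _)) (pow_nonneg h1p _)
  rw [binomialMeasure, lintegral_sum_measure]
  have h1 : ∀ k : ℕ,
      (∫⁻ x, ENNReal.ofReal (Real.exp (-a * ((x : ℝ) - 1)))
        ∂((ENNReal.ofReal ((n.choose k : ℝ) * p ^ k * (1 - p) ^ (n - k))) • Measure.dirac k))
      = ENNReal.ofReal (((n.choose k : ℝ) * p ^ k * (1 - p) ^ (n - k))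
          * Real.exp (-a * ((k : ℝ) - 1))) := by
    intro k
    rw [lintegral_smul_measure, lintegral_dirac, smul_eq_mul, ← ENNReal.ofReal_mul (hterm k)]
  rw [tsum_congr h1]
  rw [tsum_eq_sum (s := Finset.range (n+1)) (by
    intro k hk
    have : n < k := by simpa using hk
    rw [Nat.choose_eq_zero_of_lt this]
    simp)]
  rw [← ENNReal.ofReal_sum_of_nonneg (fun k _ => mul_nonneg (hterm k) (Real.exp_pos _).le)]
  congr 1
  have hexp : ∀ k : ℕ, Real.exp (-a * ((k : ℝ) - 1)) = Real.exp a * Real.exp (-a) ^ k := by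
    intro k
    rw [← Real.exp_nat_mul, ← Real.exp_add]
    congr 1
    ring
  calc ∑ k ∈ Finset.range (n+1),
        (n.choose k : ℝ) * p ^ k * (1 - p) ^ (n - k) * Real.exp (-a * ((k : ℝ) - 1))
      = Real.exp a * ∑ k ∈ Finset.range (n+1),
          (p * Real.exp (-a)) ^ k * (1 - p) ^ (n - k) * (n.choose k : ℝ) := by
        rw [Finset.mul_sum]
        exact Finset.sum_congr rfl fun k _ => by rw [hexp k, mul_pow]; ring
    _ = Real.exp a * ((1 - p) + p * Real.exp (-a)) ^ n := by
        rw [← add_pow]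
        ring_nf

lemma measurable_walk (hm : ∀ i, Measurable (ξ i)) (t : ℕ) : Measurable (walk ξ t) := by
  apply Measurable.const_add
  exact Finset.measurable_sum _ fun i _ =>
    ((measurable_from_top (f := fun k : ℕ => (k : ℤ) - 1)).comp (hm i))

lemma walk_factor {t : ℕ} {ω : Ω} (v : {x // x ∈ Finset.Icc 1 t} → ℕ)
    (hv : ∀ i, v i = ξ (i : ℕ) ω) {s : ℕ} (hs : s ≤ t) :
    1 + ∑ i ∈ (Finset.Icc 1 t).attach.filter (fun i => i.1 ≤ s), ((v i : ℤ) - 1)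
      = walk ξ s ω := by
  unfold walk
  congr 1
  calc ∑ i ∈ (Finset.Icc 1 t).attach.filter (fun i => i.1 ≤ s), ((v i : ℤ) - 1)
      = ∑ i ∈ (Finset.Icc 1 t).attach,
          (fun j : ℕ => if j ≤ s then ((ξ j ω : ℤ) - 1) else 0) (i : ℕ) := by
        rw [Finset.sum_filter]
        exact Finset.sum_congr rfl fun i _ => by simp [hv i]
    _ = ∑ j ∈ Finset.Icc 1 t, if j ≤ s then ((ξ j ω : ℤ) - 1) else 0 :=
        Finset.sum_attach (Finset.Icc 1 t) (fun j => if j ≤ s then ((ξ j ω : ℤ) - 1) else 0)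
    _ = ∑ j ∈ (Finset.Icc 1 t).filter (· ≤ s), ((ξ j ω : ℤ) - 1) :=
        (Finset.sum_filter _ _).symm
    _ = ∑ j ∈ Finset.Icc 1 s, ((ξ j ω : ℤ) - 1) := by
        congr 1
        ext j
        simp only [Finset.mem_filter, Finset.mem_Icc]
        omega


lemma measurable_B (hm : ∀ i, Measurable (ξ i)) (H t : ℕ) : MeasurableSet (B ξ H t) := by
  have : B ξ H t = ⋂ s ∈ Finset.Icc 1 t,
      (walk ξ s) ⁻¹' {z | ¬((H : ℤ) ≤ z ∨ z = 0)} := by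
    ext ω; simp [B]
  rw [this]
  exact MeasurableSet.biInter (Finset.Icc 1 t).countable_toSet
    fun s _ => (measurable_walk hm s) .of_discrete

lemma indep_step {μ : Measure Ω} (hm : ∀ i, Measurable (ξ i))
    (hindep : iIndepFun ξ μ) (H t : ℕ) (a : ℝ) :
    IndepFun
      (fun ω => Set.indicator (B ξ H t)
        (fun ω => ENNReal.ofReal (Real.exp (-a * walk ξ t ω))) ω)
      (fun ω => ENNReal.ofReal (Real.exp (-a * ((ξ (t+1) ω : ℝ) - 1)))) μ := by
  classical
  set J : Finset ℕ := Finset.Icc 1 t with hJ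
  set K : Finset ℕ := {t+1} with hK
  have hdisj : Disjoint J K := by
    simp only [hJ, hK, Finset.disjoint_singleton_right, Finset.mem_Icc]
    omega
  have base := hindep.indepFun_finset J K hdisj hm
  set W : ℕ → ({x // x ∈ J} → ℕ) → ℤ :=
    fun s v => 1 + ∑ i ∈ J.attach.filter (fun i => i.1 ≤ s), ((v i : ℤ) - 1) with hW
  set F : ({x // x ∈ J} → ℕ) → ℝ≥0∞ := fun v =>
    if (∀ s ∈ Finset.Icc 1 t, ¬((H : ℤ) ≤ W s v ∨ W s v = 0))
    then ENNReal.ofReal (Real.exp (-a * W t v)) else 0 with hF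
  have htK : t + 1 ∈ K := by simp [hK]
  set G : ({x // x ∈ K} → ℕ) → ℝ≥0∞ := fun w =>
    ENNReal.ofReal (Real.exp (-a * ((w ⟨t+1, htK⟩ : ℝ) - 1))) with hG
  have hFm : Measurable F := .of_discrete
  have hGm : Measurable G := .of_discrete
  have hI := base.comp hFm hGm
  have heq1 : (fun ω => Set.indicator (B ξ H t)
      (fun ω => ENNReal.ofReal (Real.exp (-a * walk ξ t ω))) ω)
      = F ∘ (fun ω (i : {x // x ∈ J}) => ξ (i : ℕ) ω) := by
    funext ω
    have hw : ∀ s, s ≤ t → W s (fun i : {x // x ∈ J} => ξ (i : ℕ) ω) = walk ξ s ω :=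
      fun s hs => walk_factor _ (fun i => rfl) hs
    by_cases hc : ω ∈ B ξ H t
    · have hcond : ∀ s ∈ Finset.Icc 1 t,
          ¬((H : ℤ) ≤ W s (fun i : {x // x ∈ J} => ξ (i : ℕ) ω)
            ∨ W s (fun i : {x // x ∈ J} => ξ (i : ℕ) ω) = 0) := fun s hs => by
        rw [hw s (Finset.mem_Icc.mp hs).2]; exact hc s hs
      simp only [Function.comp_apply, hF, if_pos hcond, Set.indicator_of_mem hc, hw t le_rfl]
    · have hcond : ¬ ∀ s ∈ Finset.Icc 1 t,
          ¬((H : ℤ) ≤ W s (fun i : {x // x ∈ J} => ξ (i : ℕ) ω)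
            ∨ W s (fun i : {x // x ∈ J} => ξ (i : ℕ) ω) = 0) := by
        intro hall
        apply hc
        intro s hs
        have h2 := hall s hs
        rwa [hw s (Finset.mem_Icc.mp hs).2] at h2
      simp only [Function.comp_apply, hF, if_neg hcond, Set.indicator_of_notMem hc]
  have heq2 : (fun ω => ENNReal.ofReal (Real.exp (-a * ((ξ (t+1) ω : ℝ) - 1))))
      = G ∘ (fun ω (i : {x // x ∈ K}) => ξ (i : ℕ) ω) := rfl
  rw [heq1, heq2]
  exact hI


lemma measurable_X (hm : ∀ i, Measurable (ξ i)) (H : ℕ) (a : ℝ) (t : ℕ) :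
    Measurable (X ξ H a t) := by
  induction t with
  | zero => exact measurable_const
  | succ t ih =>
      exact Measurable.ite (measurable_B hm H t)
        ((measurable_from_top (f := fun z : ℤ => ENNReal.ofReal (Real.exp (-a * z)))).comp
          (measurable_walk hm (t+1))) ih

lemma X_lintegral_ge {μ : Measure Ω} [IsProbabilityMeasure μ]
    (hm : ∀ i, Measurable (ξ i))
    (hindep : iIndepFun ξ μ) {H : ℕ} {a : ℝ}
    (hint : ∀ i, 1 ≤ ∫⁻ ω, ENNReal.ofReal (Real.exp (-a * ((ξ i ω : ℝ) - 1))) ∂μ) :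
    ∀ t, ENNReal.ofReal (Real.exp (-a)) ≤ ∫⁻ ω, X ξ H a t ω ∂μ := by
  intro t
  induction t with
  | zero => simp [X, lintegral_const]
  | succ t ih =>
      set Y : Ω → ℝ≥0∞ := fun ω => Set.indicator (B ξ H t)
        (fun ω => ENNReal.ofReal (Real.exp (-a * walk ξ t ω))) ω with hY
      set Z : Ω → ℝ≥0∞ := fun ω =>
        ENNReal.ofReal (Real.exp (-a * ((ξ (t+1) ω : ℝ) - 1))) with hZ
      have hYm : Measurable Y :=
        ((measurable_from_top (f := fun z : ℤ => ENNReal.ofReal (Real.exp (-a * z)))).comp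
          (measurable_walk hm t)).indicator (measurable_B hm H t)
      have hZm : Measurable Z :=
        (measurable_from_top (f := fun k : ℕ => ENNReal.ofReal (Real.exp (-a * ((k:ℝ) - 1))))).comp
          (hm (t+1))
      -- split the integral
      have hsplit : ∫⁻ ω, X ξ H a (t+1) ω ∂μ
          = (∫⁻ ω, Y ω * Z ω ∂μ) + ∫⁻ ω, Set.indicator (B ξ H t)ᶜ (X ξ H a t) ω ∂μ := by
        rw [← lintegral_add_left (f := fun ω => Y ω * Z ω) (hYm.mul hZm)]
        apply lintegral_congr
        intro ω
        by_cases hc : ω ∈ B ξ H t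
        · simp only [X, if_pos hc, hY, hZ, Set.indicator_of_mem hc,
            Set.indicator_of_notMem (by simpa using hc : ω ∉ (B ξ H t)ᶜ), add_zero]
          rw [← ENNReal.ofReal_mul (Real.exp_nonneg _), ← Real.exp_add]
          congr 2
          have := walk_succ (ξ := ξ) t ω
          have hcast : ((walk ξ (t+1) ω : ℤ) : ℝ)
              = ((walk ξ t ω : ℤ) : ℝ) + ((ξ (t+1) ω : ℝ) - 1) := by
            rw [this]; push_cast; ring
          rw [hcast]; ring
        · simp only [X, if_neg hc, hY, hZ, Set.indicator_of_notMem hc,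
            Set.indicator_of_mem (by simpa using hc : ω ∈ (B ξ H t)ᶜ), zero_mul, zero_add]
      have hmul : ∫⁻ ω, Y ω * Z ω ∂μ = (∫⁻ ω, Y ω ∂μ) * ∫⁻ ω, Z ω ∂μ := by
        have h2 := lintegral_mul_eq_lintegral_mul_lintegral_of_indepFun hYm hZm
          (indep_step hm hindep H t a)
        simpa [Pi.mul_apply] using h2
      have hge : (∫⁻ ω, Y ω ∂μ) ≤ ∫⁻ ω, Y ω * Z ω ∂μ := by
        rw [hmul]
        calc ∫⁻ ω, Y ω ∂μ = (∫⁻ ω, Y ω ∂μ) * 1 := (mul_one _).symm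
          _ ≤ (∫⁻ ω, Y ω ∂μ) * ∫⁻ ω, Z ω ∂μ := mul_le_mul_right (hint (t+1)) _
      have hYX : ∫⁻ ω, Y ω ∂μ = ∫⁻ ω, Set.indicator (B ξ H t) (X ξ H a t) ω ∂μ := by
        apply lintegral_congr
        intro ω
        by_cases hc : ω ∈ B ξ H t
        · simp only [hY, Set.indicator_of_mem hc, X_in hc]
        · simp only [hY, Set.indicator_of_notMem hc]
      have hrec : (∫⁻ ω, Set.indicator (B ξ H t) (X ξ H a t) ω ∂μ)
          + (∫⁻ ω, Set.indicator (B ξ H t)ᶜ (X ξ H a t) ω ∂μ) = ∫⁻ ω, X ξ H a t ω ∂μ := by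
        rw [← lintegral_add_left ((measurable_X hm H a t).indicator (measurable_B hm H t))]
        apply lintegral_congr
        intro ω
        by_cases hc : ω ∈ B ξ H t
        · simp [Set.indicator_of_mem hc, Set.indicator_of_notMem (by simpa using hc : ω ∉ (B ξ H t)ᶜ)]
        · simp [Set.indicator_of_notMem hc, Set.indicator_of_mem (by simpa using hc : ω ∈ (B ξ H t)ᶜ)]
      calc ENNReal.ofReal (Real.exp (-a)) ≤ ∫⁻ ω, X ξ H a t ω ∂μ := ih
        _ = (∫⁻ ω, Set.indicator (B ξ H t) (X ξ H a t) ω ∂μ)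
            + (∫⁻ ω, Set.indicator (B ξ H t)ᶜ (X ξ H a t) ω ∂μ) := hrec.symm
        _ ≤ (∫⁻ ω, Y ω * Z ω ∂μ) + ∫⁻ ω, Set.indicator (B ξ H t)ᶜ (X ξ H a t) ω ∂μ := by
            rw [hYX] at hge; exact add_le_add hge le_rfl
        _ = ∫⁻ ω, X ξ H a (t+1) ω ∂μ := hsplit.symm


lemma hitTime_eq' {H k : ℕ} (hk : 1 ≤ k) {ω : Ω} (hB : ω ∈ B ξ H (k-1))
    (h : (H : ℤ) ≤ walk ξ k ω ∨ walk ξ k ω = 0) : hitTime ξ H ω = k := by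
  obtain ⟨j, rfl⟩ : ∃ j, k = j + 1 := ⟨k - 1, by omega⟩
  exact hitTime_eq (by simpa using hB) (by simpa using h)

lemma notB_of {H k t : ℕ} (hk1 : 1 ≤ k) (hkt : k ≤ t) {ω : Ω}
    (h : (H : ℤ) ≤ walk ξ k ω ∨ walk ξ k ω = 0) : ω ∉ B ξ H t :=
  fun hB => hB k (Finset.mem_Icc.mpr ⟨hk1, hkt⟩) h


end NP

open NP in
set_option maxHeartbeats 1600000 in
/-- **Inequality (10), Nachmias–Peres.** For the Bin(n,p) walk with
`p = (1 + λ n^{-1/3})/n`, `λ > 0`, `H = ⌈n^{1/3}⌉` and `n` large,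
`P(S_γ ≥ H) ≤ 4λ n^{-1/3} / (1 - e^{-4λ})`. -/
theorem window_hit_prob_le (lam : ℝ) (hlam : 0 < lam) :
    ∃ N : ℕ, ∀ n : ℕ, N ≤ n →
      ∀ (Ω : Type) (_ : MeasurableSpace Ω) (μ : Measure Ω), IsProbabilityMeasure μ →
      ∀ ξ : ℕ → Ω → ℕ, (∀ i, Measurable (ξ i)) →
      (∀ i, μ.map (ξ i) =
        binomialMeasure n ((1 + lam * (n : ℝ) ^ (-(1 : ℝ) / 3)) / (n : ℝ))) →
      iIndepFun ξ μ →
      μ {ω | ((⌈(n : ℝ) ^ ((1 : ℝ) / 3)⌉₊ : ℕ) : ℤ) ≤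
          walk ξ (hitTime ξ ⌈(n : ℝ) ^ ((1 : ℝ) / 3)⌉₊ ω) ω} ≤
        ENNReal.ofReal (4 * lam * (n : ℝ) ^ (-(1 : ℝ) / 3) /
          (1 - Real.exp (-(4 * lam)))) := by
  refine ⟨⌈(8 * lam)^3⌉₊ + 18, ?_⟩
  intro n hn Ω mΩ μ hμ ξ hmeas hmap hindep
  -- abbreviations
  set r3 : ℝ := (n : ℝ) ^ ((1 : ℝ)/3) with hr3def
  set e : ℝ := (n : ℝ) ^ (-(1 : ℝ)/3) with hedef
  set H : ℕ := ⌈r3⌉₊ with hHdef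
  set a : ℝ := 4 * lam * e with hadef
  set p : ℝ := (1 + lam * e) / (n : ℝ) with hpdef
  -- basic numeric facts
  have hn18 : 18 ≤ n := by omega
  have hn18R : (18:ℝ) ≤ (n:ℝ) := by exact_mod_cast hn18
  have hn0 : (0:ℝ) < (n:ℝ) := by linarith
  have hnR : ((8 * lam)^3 : ℝ) ≤ (n:ℝ) := by
    have h1 : ((8 * lam)^3 : ℝ) ≤ (⌈(8 * lam)^3⌉₊ : ℝ) := Nat.le_ceil _
    have h2 : (⌈(8 * lam)^3⌉₊ : ℕ) ≤ n := by omega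
    have h2' : ((⌈(8 * lam)^3⌉₊ : ℕ) : ℝ) ≤ (n:ℝ) := by exact_mod_cast h2
    linarith
  have hr3pos : 0 < r3 := Real.rpow_pos_of_pos hn0 _
  have hee : e = r3⁻¹ := by
    rw [hedef, hr3def, neg_div, Real.rpow_neg hn0.le]
  have hepos : 0 < e := by rw [hee]; exact inv_pos.mpr hr3pos
  have her3 : e * r3 = 1 := by rw [hee]; exact inv_mul_cancel₀ hr3pos.ne'
  have hr3_ge : 8 * lam ≤ r3 := by
    have h1 := Real.rpow_le_rpow (by positivity) hnR (by norm_num : (0:ℝ) ≤ 1/3)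
    have h2 : ((8 * lam)^3 : ℝ) ^ ((1:ℝ)/3) = 8 * lam := by
      rw [← Real.rpow_natCast (8 * lam) 3, ← Real.rpow_mul (by positivity)]
      norm_num
    rw [h2] at h1
    exact h1
  have ha0 : 0 < a := by positivity
  have ha_half : a ≤ 1/2 := by
    have h1 : a * r3 = 4 * lam := by rw [hadef, mul_assoc, her3, mul_one]
    nlinarith [hr3pos, hr3_ge]
  have hp0 : 0 ≤ p := by positivity
  have hnp : (n:ℝ) * p = 1 + a/4 := by
    rw [hpdef, hadef]
    field_simp
  have hp1 : p ≤ 1 := by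
    nlinarith [hnp, hp0, hn18R]
  have hH_ge : r3 ≤ (H : ℝ) := Nat.le_ceil r3
  have hH2 : 2 ≤ H := by
    have h8 : (8:ℝ) ≤ (n:ℝ) := by linarith [hn18R]
    have h1 := Real.rpow_le_rpow (by norm_num) h8 (by norm_num : (0:ℝ) ≤ 1/3)
    have h2 : (8:ℝ) ^ ((1:ℝ)/3) = 2 := by
      rw [show (8:ℝ) = (2:ℝ)^(3:ℕ) by norm_num, ← Real.rpow_natCast (2:ℝ) 3,
        ← Real.rpow_mul (by norm_num)]
      norm_num
    rw [h2] at h1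
    have : (2:ℝ) ≤ (H:ℝ) := by calc (2:ℝ) ≤ r3 := h1
                                    _ ≤ (H:ℝ) := hH_ge
    exact_mod_cast this
  have haH : 4 * lam ≤ a * (H:ℝ) := by
    have h1 : a * r3 = 4 * lam := by rw [hadef, mul_assoc, her3, mul_one]
    nlinarith [ha0, hH_ge, hr3pos]
  -- expectation of the step factor is ≥ 1
  have hint : ∀ i, 1 ≤ ∫⁻ ω, ENNReal.ofReal (Real.exp (-a * ((ξ i ω : ℝ) - 1))) ∂μ := by
    intro i
    have hFm : Measurable (fun k : ℕ => ENNReal.ofReal (Real.exp (-a * ((k : ℝ) - 1)))) :=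
      .of_discrete
    have h1 : ∫⁻ ω, ENNReal.ofReal (Real.exp (-a * ((ξ i ω : ℝ) - 1))) ∂μ
        = ∫⁻ k, ENNReal.ofReal (Real.exp (-a * ((k : ℝ) - 1))) ∂(μ.map (ξ i)) :=
      (lintegral_map hFm (hmeas i)).symm
    rw [h1, hmap i]
    rw [binom_lintegral n p a hp0 hp1]
    rw [show (1:ℝ≥0∞) = ENNReal.ofReal 1 by simp]
    apply ENNReal.ofReal_le_ofReal
    have h2 := analytic n a p ha0 ha_half hp0 hnp hn18
    have h3 : (1 - p) + p * Real.exp (-a) = 1 - p * (1 - Real.exp (-a)) := by ring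
    calc (1:ℝ) = Real.exp a * Real.exp (-a) := by
          rw [← Real.exp_add]; simp
      _ ≤ Real.exp a * ((1 - p) + p * Real.exp (-a)) ^ n := by
          rw [h3]
          exact mul_le_mul_of_nonneg_left h2 (Real.exp_pos a).le
  have hsub := X_lintegral_ge hmeas hindep (H := H) hint
  -- the increasing events
  set Ak : ℕ → Set Ω := fun t =>
    ⋃ k ∈ Finset.Icc 1 t, (B ξ H (k-1) ∩ {ω | (H:ℤ) ≤ walk ξ k ω}) with hAkdef
  have hAk_meas : ∀ t, MeasurableSet (Ak t) := by
    intro t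
    apply MeasurableSet.biUnion (Finset.Icc 1 t).countable_toSet
    intro k _
    exact (measurable_B hmeas H (k-1)).inter
      ((measurable_walk hmeas k) (MeasurableSet.of_discrete (s := {z : ℤ | (H:ℤ) ≤ z})))
  have hAk_mono : Monotone Ak := by
    intro s t hst
    apply Set.iUnion₂_subset
    intro k hk
    have : k ∈ Finset.Icc 1 t := by
      rcases Finset.mem_Icc.mp hk with ⟨h1, h2⟩
      exact Finset.mem_Icc.mpr ⟨h1, h2.trans hst⟩
    exact Set.subset_iUnion₂_of_subset k this le_rfl
  -- event = union
  have hevent : {ω | ((H : ℕ) : ℤ) ≤ walk ξ (hitTime ξ H ω) ω} = ⋃ t, Ak t := by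
    ext ω
    simp only [Set.mem_setOf_eq, Set.mem_iUnion, hAkdef, Finset.mem_Icc, Set.mem_inter_iff]
    constructor
    · intro hω
      have hne : {t | 1 ≤ t ∧ ((H : ℤ) ≤ walk ξ t ω ∨ walk ξ t ω = 0)}.Nonempty := by
        by_contra hemp
        rw [Set.not_nonempty_iff_eq_empty] at hemp
        have h0 : hitTime ξ H ω = 0 := by rw [hitTime, hemp, Nat.sInf_empty]
        rw [h0, walk_zero (ξ := ξ) ω] at hω
        have : (H:ℤ) ≤ 1 := hω
        omega
      have hmem : 1 ≤ hitTime ξ H ω ∧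
          ((H : ℤ) ≤ walk ξ (hitTime ξ H ω) ω ∨ walk ξ (hitTime ξ H ω) ω = 0) :=
        Nat.sInf_mem hne
      refine ⟨hitTime ξ H ω, ⟨hitTime ξ H ω, ⟨hmem.1, le_rfl⟩, ?_, hω⟩⟩
      intro s hs hcond
      have hγs : hitTime ξ H ω ≤ s := Nat.sInf_le ⟨(Finset.mem_Icc.mp hs).1, hcond⟩
      have hs2 : s ≤ hitTime ξ H ω - 1 := (Finset.mem_Icc.mp hs).2
      have hγ1 := hmem.1
      omega
    · rintro ⟨t, k, ⟨hk1, hkt⟩, hB, hw⟩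
      have := hitTime_eq' hk1 hB (Or.inl hw)
      rw [this]
      exact hw
  -- pointwise bound and measure bound for each t
  have hbound : ∀ t, μ (Ak t) ≤ ENNReal.ofReal (4 * lam * e / (1 - Real.exp (-(4 * lam)))) := by
    intro t
    -- pointwise bounds on X t
    have hptwise : ∀ ω, X ξ H a t ω ≤
        (Ak t).indicator (fun _ => ENNReal.ofReal (Real.exp (-(a * (H:ℝ))))) ω
          + (Ak t)ᶜ.indicator (fun _ => 1) ω := by
      intro ω
      by_cases hc : ω ∈ Ak t
      · rw [Set.indicator_of_mem hc, Set.indicator_of_notMem (by simpa using hc), add_zero]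
        obtain ⟨k, hB, ⟨hk1, hkt⟩, hw⟩ : ∃ k, ω ∈ B ξ H (k-1) ∧
            (1 ≤ k ∧ k ≤ t) ∧ (H:ℤ) ≤ walk ξ k ω := by
          simpa [hAkdef, Set.mem_iUnion] using hc
        have hγ : hitTime ξ H ω = k := hitTime_eq' hk1 hB (Or.inl hw)
        have hnotB : ω ∉ B ξ H t := notB_of hk1 hkt (Or.inl hw)
        obtain ⟨-, -, -, hX⟩ := X_out (a := a) hnotB
        rw [hX, hγ]
        apply ENNReal.ofReal_le_ofReal
        apply Real.exp_le_exp.mpr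
        have : ((H:ℤ):ℝ) ≤ ((walk ξ k ω : ℤ):ℝ) := by exact_mod_cast hw
        have hH' : ((H:ℤ):ℝ) = (H:ℝ) := by push_cast; ring
        nlinarith [ha0]
      · rw [Set.indicator_of_notMem hc, Set.indicator_of_mem (by simpa using hc), zero_add]
        by_cases hB : ω ∈ B ξ H t
        · rw [X_in hB]
          rw [show (1:ℝ≥0∞) = ENNReal.ofReal 1 by simp]
          apply ENNReal.ofReal_le_ofReal
          rw [show (1:ℝ) = Real.exp 0 by simp]
          apply Real.exp_le_exp.mpr
          have h1 : (1:ℤ) ≤ walk ξ t ω := B_pos hB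
          have h1' : (1:ℝ) ≤ ((walk ξ t ω : ℤ):ℝ) := by exact_mod_cast h1
          nlinarith [ha0]
        · obtain ⟨hγ1, hγt, hγcond, hX⟩ := X_out (a := a) hB
          rw [hX]
          rw [show (1:ℝ≥0∞) = ENNReal.ofReal 1 by simp]
          apply ENNReal.ofReal_le_ofReal
          rw [show (1:ℝ) = Real.exp 0 by simp]
          apply Real.exp_le_exp.mpr
          have h0 : (0:ℤ) ≤ walk ξ (hitTime ξ H ω) ω := by
            rcases hγcond with h | h
            · omega
            · omega
          have h0' : (0:ℝ) ≤ ((walk ξ (hitTime ξ H ω) ω : ℤ):ℝ) := by exact_mod_cast h0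
          nlinarith [ha0]
    -- integrate
    have hint2 : ∫⁻ ω, X ξ H a t ω ∂μ ≤
        ENNReal.ofReal (Real.exp (-(a * (H:ℝ)))) * μ (Ak t) + μ ((Ak t)ᶜ) := by
      calc ∫⁻ ω, X ξ H a t ω ∂μ
          ≤ ∫⁻ ω, ((Ak t).indicator (fun _ => ENNReal.ofReal (Real.exp (-(a * (H:ℝ))))) ω
            + (Ak t)ᶜ.indicator (fun _ => 1) ω) ∂μ := lintegral_mono hptwise
        _ = ENNReal.ofReal (Real.exp (-(a * (H:ℝ)))) * μ (Ak t) + μ ((Ak t)ᶜ) := by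
            rw [lintegral_add_left (measurable_const.indicator (hAk_meas t))]
            rw [lintegral_indicator (hAk_meas t), lintegral_indicator (hAk_meas t).compl]
            simp [lintegral_const, Measure.restrict_apply_univ]
    -- convert to reals
    set r : ℝ := (μ (Ak t)).toReal with hrdef
    have hAfin : μ (Ak t) ≠ ⊤ := measure_ne_top μ _
    have hr0 : 0 ≤ r := ENNReal.toReal_nonneg
    have hr1 : r ≤ 1 := by
      rw [hrdef]
      exact ENNReal.toReal_le_of_le_ofReal (by norm_num) (by simpa using prob_le_one (μ := μ) (s := Ak t))
    have hμA : μ (Ak t) = ENNReal.ofReal r := (ENNReal.ofReal_toReal hAfin).symm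
    have hμAc : μ ((Ak t)ᶜ) = ENNReal.ofReal (1 - r) := by
      rw [prob_compl_eq_one_sub (hAk_meas t), hμA]
      rw [← ENNReal.ofReal_one, ← ENNReal.ofReal_sub _ hr0]
    have hchain : ENNReal.ofReal (Real.exp (-a)) ≤
        ENNReal.ofReal (Real.exp (-(a * (H:ℝ))) * r + (1 - r)) := by
      calc ENNReal.ofReal (Real.exp (-a)) ≤ ∫⁻ ω, X ξ H a t ω ∂μ := hsub t
        _ ≤ ENNReal.ofReal (Real.exp (-(a * (H:ℝ)))) * μ (Ak t) + μ ((Ak t)ᶜ) := hint2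
        _ = ENNReal.ofReal (Real.exp (-(a * (H:ℝ))) * r + (1 - r)) := by
            rw [hμA, hμAc, ← ENNReal.ofReal_mul (Real.exp_pos _).le,
              ← ENNReal.ofReal_add (mul_nonneg (Real.exp_pos _).le hr0) (by linarith)]
    have hreal : Real.exp (-a) ≤ Real.exp (-(a * (H:ℝ))) * r + (1 - r) := by
      have hrhs : 0 ≤ Real.exp (-(a * (H:ℝ))) * r + (1 - r) := by
        nlinarith [mul_nonneg (Real.exp_pos (-(a * (H:ℝ)))).le hr0, hr1]
      exact (ENNReal.ofReal_le_ofReal_iff hrhs).mp hchain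
    -- real arithmetic
    have h1 : 1 - Real.exp (-a) ≤ a := by
      have := Real.add_one_le_exp (-a); linarith
    have h2 : Real.exp (-(a * (H:ℝ))) ≤ Real.exp (-(4 * lam)) :=
      Real.exp_le_exp.mpr (by linarith)
    have hden : 0 < 1 - Real.exp (-(4 * lam)) := by
      have : Real.exp (-(4 * lam)) < 1 := by
        rw [show (1:ℝ) = Real.exp 0 by simp]
        exact Real.exp_lt_exp.mpr (by linarith)
      linarith
    have hrle : r ≤ 4 * lam * e / (1 - Real.exp (-(4 * lam))) := by
      rw [le_div_iff₀ hden]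
      have h3 : r * (1 - Real.exp (-(a * (H:ℝ)))) ≤ 1 - Real.exp (-a) := by nlinarith
      have h4 : r * (1 - Real.exp (-(4 * lam))) ≤ r * (1 - Real.exp (-(a * (H:ℝ)))) := by
        apply mul_le_mul_of_nonneg_left _ hr0
        linarith
      have ha_eq : a = 4 * lam * e := hadef
      nlinarith [h3, h4, h1]
    rw [hμA]
    exact ENNReal.ofReal_le_ofReal hrle
  -- conclude
  rw [hevent]
  rw [Directed.measure_iUnion (directed_of_isDirected_le hAk_mono)]
  exact iSup_le hbound
end
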